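/- The range of the function f on [0,1] (with f(0) = 0) is exactly the closed interval [0, 1]. -/

import Mathlib

open scoped BigOperators

/-- The value `Δ^E_g` of the Engel series with digit sequence `g`
(`g n` is the paper's `g_{n+1}`). -/
noncomputable def engelSum (g : ℕ → ℕ) : ℝ :=
  ∑' n : ℕ, ∏ k ∈ Finset.range (n + 1),
    ((2 : ℝ) + ∑ i ∈ Finset.range (k + 1), (g i : ℝ))⁻¹

/-- The value of the series `r_{g_1} + ∑_{k≥2} r_{g_k} ∏_{i=1}^{k-1} u_{g_i}`
defining `f` on the digit sequence `g`. -/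
noncomputable def fSeries (u r : ℕ → ℝ) (g : ℕ → ℕ) : ℝ :=
  r (g 0) + ∑' k : ℕ, r (g (k + 1)) * ∏ i ∈ Finset.range (k + 1), u (g i)

/-- `rpred r n = r (n-1)`, with the convention `r (-1) = 1`. -/
noncomputable def rpred (r : ℕ → ℝ) (n : ℕ) : ℝ := if n = 0 then 1 else r (n - 1)

lemma engel_term_pos (g : ℕ → ℕ) (n : ℕ) :
    0 < ∏ k ∈ Finset.range (n + 1), ((2 : ℝ) + ∑ i ∈ Finset.range (k + 1), (g i : ℝ))⁻¹ := by
  apply Finset.prod_pos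
  intro k _
  have h : (0:ℝ) ≤ ∑ i ∈ Finset.range (k + 1), (g i : ℝ) :=
    Finset.sum_nonneg fun i _ => Nat.cast_nonneg _
  positivity

lemma engel_term_le (g : ℕ → ℕ) (n : ℕ) :
    ∏ k ∈ Finset.range (n + 1), ((2 : ℝ) + ∑ i ∈ Finset.range (k + 1), (g i : ℝ))⁻¹
      ≤ (1/2 : ℝ) ^ (n + 1) := by
  have := Finset.prod_const (s := Finset.range (n+1)) (b := (1/2:ℝ))
  simp only [Finset.card_range] at this
  rw [← this]
  apply Finset.prod_le_prod
  · intro k _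
    have h : (0:ℝ) ≤ ∑ i ∈ Finset.range (k + 1), (g i : ℝ) :=
      Finset.sum_nonneg fun i _ => Nat.cast_nonneg _
    positivity
  · intro k _
    have h : (0:ℝ) ≤ ∑ i ∈ Finset.range (k + 1), (g i : ℝ) :=
      Finset.sum_nonneg fun i _ => Nat.cast_nonneg _
    rw [one_div]
    apply inv_anti₀ <;> linarith

lemma engel_summable (g : ℕ → ℕ) :
    Summable (fun n => ∏ k ∈ Finset.range (n + 1),
      ((2 : ℝ) + ∑ i ∈ Finset.range (k + 1), (g i : ℝ))⁻¹) := by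
  apply Summable.of_nonneg_of_le (fun n => (engel_term_pos g n).le) (engel_term_le g)
  have : Summable (fun n : ℕ => (1/2 : ℝ) ^ n) :=
    summable_geometric_of_lt_one (by norm_num) (by norm_num)
  exact (summable_nat_add_iff 1).mpr this

lemma engelSum_mem (g : ℕ → ℕ) : engelSum g ∈ Set.Ioc (0:ℝ) 1 := by
  constructor
  · exact Summable.tsum_pos (engel_summable g) (fun n => (engel_term_pos g n).le) 0 (engel_term_pos g 0)
  · have h1 : engelSum g ≤ ∑' n : ℕ, (1/2 : ℝ) ^ (n + 1) := by
      apply Summable.tsum_le_tsum (engel_term_le g) (engel_summable g)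
      exact (summable_nat_add_iff 1).mpr
        (summable_geometric_of_lt_one (by norm_num) (by norm_num))
    have h2 : ∑' n : ℕ, (1/2 : ℝ) ^ (n + 1) = 1 := by
      have := tsum_geometric_two' 1
      simpa [div_pow, pow_succ, one_div, mul_comm, div_eq_mul_inv] using this
    linarith

lemma exists_c (u : ℕ → ℝ) (hu_sum : HasSum u 1) (hu_abs : ∀ n, |u n| < 1) :
    ∃ c : ℝ, 0 ≤ c ∧ c < 1 ∧ ∀ n, |u n| ≤ c := by
  have h0 : Filter.Tendsto u Filter.atTop (nhds 0) := hu_sum.summable.tendsto_atTop_zero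
  have h1 : ∀ᶠ n in Filter.atTop, |u n| < 1/2 := by
    have h0' : Filter.Tendsto (fun n => |u n|) Filter.atTop (nhds 0) := by
      simpa using h0.abs
    exact h0'.eventually_lt_const (by norm_num : (0:ℝ) < 1/2)
  obtain ⟨N, hN⟩ := h1.exists_forall_of_atTop
  refine ⟨max (1/2) ((Finset.range (N+1)).sup' (by simp) fun n => |u n|), ?_, ?_, ?_⟩
  · exact le_trans (by norm_num) (le_max_left _ _)
  · apply max_lt (by norm_num)
    rw [Finset.sup'_lt_iff]
    exact fun n _ => hu_abs n
  · intro n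
    rcases le_or_gt n N with h | h
    · exact le_trans (Finset.le_sup' (f := fun n => |u n|)
        (by simpa using Nat.lt_succ_of_le h)) (le_max_right _ _)
    · exact le_trans (hN n h.le).le (le_max_left _ _)

/-- the range of f on [0,1] is exactly [0,1]. -/
theorem stmt6
    (u r : ℕ → ℝ)
    (hu_sum : HasSum u 1)
    (hu_abs : ∀ n, |u n| < 1)
    (hr : ∀ n, r n = 1 - ∑ i ∈ Finset.range (n + 1), u i)
    (hr01 : ∀ n, 0 < r n ∧ r n < 1)
    (G : ℝ → ℕ → ℕ)
    (hG : ∀ x ∈ Set.Ioc (0:ℝ) 1, engelSum (G x) = x)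
    (hGuniq : ∀ x ∈ Set.Ioc (0:ℝ) 1, ∀ g : ℕ → ℕ, engelSum g = x → g = G x)
    (f : ℝ → ℝ)
    (hf : ∀ x ∈ Set.Ioc (0:ℝ) 1, f x = fSeries u r (G x))
    (hf0 : f 0 = 0) :
    f '' Set.Icc (0:ℝ) 1 = Set.Icc (0:ℝ) 1 := by
  classical
  obtain ⟨c, hc0, hc1, hc⟩ := exists_c u hu_sum hu_abs
  set ρ : ℕ → ℝ := fun n => if n = 0 then 1 else r (n - 1) with hρdef
  have hρ : ∀ n, 0 < ρ n ∧ ρ n ≤ 1 := by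
    intro n
    cases n with
    | zero => simp [hρdef]
    | succ m =>
      simp only [hρdef, Nat.succ_ne_zero, if_false, Nat.add_sub_cancel]
      exact ⟨(hr01 m).1, (hr01 m).2.le⟩
  have hu_eq : ∀ n, u n = ρ n - r n := by
    intro n
    cases n with
    | zero =>
      have h := hr 0
      norm_num [Finset.sum_range_one] at h
      simp only [hρdef, if_pos rfl]
      linarith
    | succ m =>
      have h1 := hr m
      have h2 := hr (m+1)
      rw [Finset.sum_range_succ] at h2
      simp only [hρdef, Nat.succ_ne_zero, if_false, Nat.add_sub_cancel]
      linarith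
  -- bound on series terms
  have hbound : ∀ (g : ℕ → ℕ) (j : ℕ),
      |r (g (j+1)) * ∏ i ∈ Finset.range (j+1), u (g i)| ≤ c ^ j := by
    intro g j
    rw [abs_mul, Finset.abs_prod]
    have h1 : |r (g (j+1))| ≤ 1 := by
      have h := hr01 (g (j+1))
      rw [abs_of_pos h.1]; exact h.2.le
    have h2 : ∏ i ∈ Finset.range (j+1), |u (g i)| ≤ c ^ (j+1) := by
      calc ∏ i ∈ Finset.range (j+1), |u (g i)|
          ≤ ∏ _i ∈ Finset.range (j+1), c :=
            Finset.prod_le_prod (fun i _ => abs_nonneg _) (fun i _ => hc _)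
        _ = c ^ (j+1) := by simp [Finset.prod_const]
    have h3 : (0:ℝ) ≤ ∏ i ∈ Finset.range (j+1), |u (g i)| :=
      Finset.prod_nonneg fun i _ => abs_nonneg _
    have h4 : c ^ (j+1) ≤ c ^ j := by
      rw [pow_succ]
      nlinarith [pow_nonneg hc0 j]
    calc |r (g (j+1))| * ∏ i ∈ Finset.range (j+1), |u (g i)|
        ≤ 1 * c ^ (j+1) := mul_le_mul h1 h2 h3 one_pos.le
      _ = c ^ (j+1) := one_mul _
      _ ≤ c ^ j := h4
  have hsum_T : ∀ g : ℕ → ℕ,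
      Summable (fun j => r (g (j+1)) * ∏ i ∈ Finset.range (j+1), u (g i)) := by
    intro g
    apply Summable.of_norm_bounded (summable_geometric_of_lt_one hc0 hc1)
    intro j
    rw [Real.norm_eq_abs]
    exact hbound g j
  -- crude bound on fSeries
  set M : ℝ := 1 + (1 - c)⁻¹ with hMdef
  have h1c : (0:ℝ) < 1 - c := by linarith
  have hM : 0 ≤ M := by
    have := inv_nonneg.mpr h1c.le
    rw [hMdef]; linarith
  have hF_abs : ∀ g : ℕ → ℕ, |fSeries u r g| ≤ M := by
    intro g
    have h1 : ‖∑' j : ℕ, r (g (j+1)) * ∏ i ∈ Finset.range (j+1), u (g i)‖ ≤ (1-c)⁻¹ := by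
      apply tsum_of_norm_bounded (hasSum_geometric_of_lt_one hc0 hc1)
      intro j
      rw [Real.norm_eq_abs]
      exact hbound g j
    rw [Real.norm_eq_abs] at h1
    have h2 : |r (g 0)| ≤ 1 := by
      have h := hr01 (g 0)
      rw [abs_of_pos h.1]; exact h.2.le
    calc |fSeries u r g| ≤ |r (g 0)| + |∑' j : ℕ, r (g (j+1)) * ∏ i ∈ Finset.range (j+1), u (g i)| :=
          abs_add_le _ _
      _ ≤ M := by rw [hMdef]; linarith
  -- shift identity
  have hshift : ∀ g : ℕ → ℕ,
      fSeries u r g = r (g 0) + u (g 0) * fSeries u r (fun n => g (n+1)) := by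
    intro g
    have hterm : ∀ j : ℕ, r (g (j+1)) * ∏ i ∈ Finset.range (j+1), u (g i)
        = (r (g (j+1)) * ∏ i ∈ Finset.range j, u (g (i+1))) * u (g 0) := by
      intro j
      rw [Finset.prod_range_succ']
      ring
    have hsumh : Summable (fun j => r (g (j+1)) * ∏ i ∈ Finset.range j, u (g (i+1))) := by
      apply (summable_nat_add_iff 1).mp
      exact hsum_T (fun n => g (n+1))
    have h2 : ∑' j : ℕ, r (g (j+1)) * ∏ i ∈ Finset.range (j+1), u (g i)
        = (∑' j : ℕ, r (g (j+1)) * ∏ i ∈ Finset.range j, u (g (i+1))) * u (g 0) := by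
      rw [← tsum_mul_right]
      exact tsum_congr hterm
    have h3 : ∑' j : ℕ, r (g (j+1)) * ∏ i ∈ Finset.range j, u (g (i+1))
        = r (g 1) + ∑' j : ℕ, r (g (j+1+1)) * ∏ i ∈ Finset.range (j+1), u (g (i+1)) := by
      rw [Summable.tsum_eq_zero_add hsumh]
      simp
    simp only [fSeries]
    rw [h2, h3]
    ring
  -- convexity fact
  have hconv : ∀ n : ℕ, ∀ t : ℝ, 0 ≤ t → t ≤ 1 → 0 ≤ r n + u n * t ∧ r n + u n * t ≤ 1 := by
    intro n t ht0 ht1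
    have h1 := hr01 n
    have h2 := hρ n
    rw [hu_eq n]
    constructor
    · nlinarith [h1.1, h2.1]
    · nlinarith [h1.2, h2.2]
  -- inductive bound
  have hFk : ∀ k : ℕ, ∀ g : ℕ → ℕ,
      -(c ^ k * M) ≤ fSeries u r g ∧ fSeries u r g ≤ 1 + c ^ k * M := by
    intro k
    induction k with
    | zero =>
      intro g
      have h := abs_le.mp (hF_abs g)
      constructor
      · simpa using h.1
      · simp only [pow_zero, one_mul]
        linarith [h.2]
    | succ k ih =>
      intro g
      obtain ⟨h1, h2⟩ := ih (fun n => g (n+1))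
      set t : ℝ := fSeries u r (fun n => g (n+1)) with htdef
      set t' : ℝ := max 0 (min 1 t) with ht'def
      have hckM : 0 ≤ c ^ k * M := mul_nonneg (pow_nonneg hc0 k) hM
      have ht'0 : 0 ≤ t' := le_max_left _ _
      have ht'1 : t' ≤ 1 := max_le zero_le_one (min_le_left _ _)
      have hdiff : |t - t'| ≤ c ^ k * M := by
        rcases le_total t 0 with h | h
        · have he : t' = 0 := by
            rw [ht'def, min_eq_right (h.trans zero_le_one), max_eq_left h]
          rw [he, sub_zero, abs_of_nonpos h]
          linarith
        · rcases le_total t 1 with h4 | h4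
          · have he : t' = t := by
              rw [ht'def, min_eq_right h4, max_eq_right h]
            rw [he, sub_self, abs_zero]
            exact hckM
          · have he : t' = 1 := by
              rw [ht'def, min_eq_left h4, max_eq_right zero_le_one]
            rw [he, abs_of_nonneg (by linarith : (0:ℝ) ≤ t - 1)]
            linarith
      have hmem := hconv (g 0) t' ht'0 ht'1
      have habs : |u (g 0) * (t - t')| ≤ c * (c ^ k * M) := by
        rw [abs_mul]
        exact mul_le_mul (hc _) hdiff (abs_nonneg _) hc0
      have habs' := abs_le.mp habs
      have hFeq : fSeries u r g = (r (g 0) + u (g 0) * t') + u (g 0) * (t - t') := by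
        rw [hshift g, ← htdef]; ring
      have hpow : c ^ (k+1) * M = c * (c ^ k * M) := by ring
      constructor
      · rw [hFeq, hpow]
        linarith [hmem.1, habs'.1]
      · rw [hFeq, hpow]
        linarith [hmem.2, habs'.2]
  have hlim : Filter.Tendsto (fun k : ℕ => c ^ k * M) Filter.atTop (nhds 0) := by
    have := (tendsto_pow_atTop_nhds_zero_of_lt_one hc0 hc1).mul_const M
    simpa using this
  have hF01 : ∀ g : ℕ → ℕ, fSeries u r g ∈ Set.Icc (0:ℝ) 1 := by
    intro g
    constructor
    · have hneg : Filter.Tendsto (fun k : ℕ => -(c ^ k * M)) Filter.atTop (nhds 0) := by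
        simpa using hlim.neg
      exact le_of_tendsto hneg (Filter.Eventually.of_forall fun k => (hFk k g).1)
    · have hpos : Filter.Tendsto (fun k : ℕ => 1 + c ^ k * M) Filter.atTop (nhds 1) := by
        simpa using (tendsto_const_nhds (x := (1:ℝ)) (f := Filter.atTop (α := ℕ))).add hlim
      exact ge_of_tendsto hpos (Filter.Eventually.of_forall fun k => (hFk k g).2)
  -- r tends to 0
  have hrlim : Filter.Tendsto r Filter.atTop (nhds 0) := by
    have h1 := hu_sum.tendsto_sum_nat
    have h2 : Filter.Tendsto (fun n : ℕ => ∑ i ∈ Finset.range (n+1), u i)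
        Filter.atTop (nhds 1) := h1.comp (Filter.tendsto_add_atTop_nat 1)
    have h3 := h2.const_sub 1
    simp only [sub_self] at h3
    have he : r = fun n => 1 - ∑ i ∈ Finset.range (n+1), u i := funext hr
    rw [he]
    exact h3
  have hexists : ∀ y : ℝ, 0 < y → y ≤ 1 → ∃ n, r n < y ∧ y ≤ ρ n := by
    intro y hy0 hy1
    have h1 : ∃ n, r n < y := (hrlim.eventually_lt_const hy0).exists
    have hN : r (Nat.find h1) < y := Nat.find_spec h1
    rcases hNat : Nat.find h1 with _ | m
    · rw [hNat] at hN
      refine ⟨0, hN, ?_⟩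
      simp only [hρdef, if_pos rfl]
      exact hy1
    · rw [hNat] at hN
      have hm : ¬ r m < y := Nat.find_min h1 (by omega)
      push_neg at hm
      refine ⟨m+1, hN, ?_⟩
      simp only [hρdef, Nat.succ_ne_zero, if_false, Nat.add_sub_cancel]
      exact hm
  have hexists' : ∀ y : ℝ, ∃ n, (0 < y ∧ y ≤ 1) → (r n < y ∧ y ≤ ρ n) := by
    intro y
    by_cases h : 0 < y ∧ y ≤ 1
    · obtain ⟨n, hn⟩ := hexists y h.1 h.2
      exact ⟨n, fun _ => hn⟩
    · exact ⟨0, fun h' => absurd h' h⟩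
  choose step hstep using hexists'
  -- surjectivity
  have hsurj : ∀ y : ℝ, 0 < y → y ≤ 1 → ∃ x ∈ Set.Ioc (0:ℝ) 1, f x = y := by
    intro y hy0 hy1
    set nxt : ℝ → ℝ := fun z => (z - r (step z)) / u (step z) with hnxtdef
    set yseq : ℕ → ℝ := fun k => nxt^[k] y with hyseqdef
    have hkey : ∀ z : ℝ, 0 < z → z ≤ 1 →
        ((0 < nxt z ∧ nxt z ≤ 1) ∧ z = r (step z) + u (step z) * nxt z) := by
      intro z h0 h1
      obtain ⟨ha, hb⟩ := hstep z ⟨h0, h1⟩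
      have hu0 : 0 < u (step z) := by
        rw [hu_eq]
        linarith
      refine ⟨⟨?_, ?_⟩, ?_⟩
      · exact div_pos (by linarith) hu0
      · rw [hnxtdef]
        simp only
        rw [div_le_one hu0, hu_eq]
        linarith
      · rw [hnxtdef]
        simp only
        field_simp
        ring
    have hy : ∀ k, 0 < yseq k ∧ yseq k ≤ 1 := by
      intro k
      induction k with
      | zero => simpa [hyseqdef] using ⟨hy0, hy1⟩
      | succ k ih =>
        have h := (hkey _ ih.1 ih.2).1
        simpa [hyseqdef, Function.iterate_succ_apply'] using h
    set g : ℕ → ℕ := fun k => step (yseq k) with hgdef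
    have hrec : ∀ k, yseq k = r (g k) + u (g k) * yseq (k+1) := by
      intro k
      have h := (hkey _ (hy k).1 (hy k).2).2
      simpa [hyseqdef, hgdef, Function.iterate_succ_apply'] using h
    have hpart : ∀ k : ℕ, y = r (g 0) + (∑ j ∈ Finset.range k,
        r (g (j+1)) * ∏ i ∈ Finset.range (j+1), u (g i))
        + (∏ i ∈ Finset.range (k+1), u (g i)) * yseq (k+1) := by
      intro k
      induction k with
      | zero =>
        have h0 := hrec 0
        have hy0' : yseq 0 = y := by simp [hyseqdef]
        rw [hy0'] at h0
        simpa using h0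
      | succ k ih =>
        rw [ih, hrec (k+1), Finset.sum_range_succ (fun j => r (g (j+1)) *
          ∏ i ∈ Finset.range (j+1), u (g i)) k,
          Finset.prod_range_succ (fun i => u (g i)) (k+1)]
        ring
    have hTs := hsum_T g
    have hA : Filter.Tendsto (fun k : ℕ => r (g 0) + ∑ j ∈ Finset.range k,
        r (g (j+1)) * ∏ i ∈ Finset.range (j+1), u (g i)) Filter.atTop
        (nhds (fSeries u r g)) := by
      have h := hTs.hasSum.tendsto_sum_nat
      simp only [fSeries]
      exact tendsto_const_nhds.add h
    have hB : Filter.Tendsto (fun k : ℕ => (∏ i ∈ Finset.range (k+1), u (g i)) * yseq (k+1))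
        Filter.atTop (nhds 0) := by
      apply squeeze_zero_norm (a := fun k => c ^ (k+1))
      · intro k
        rw [Real.norm_eq_abs, abs_mul, Finset.abs_prod]
        have h1 : ∏ i ∈ Finset.range (k+1), |u (g i)| ≤ c ^ (k+1) := by
          calc ∏ i ∈ Finset.range (k+1), |u (g i)|
              ≤ ∏ _i ∈ Finset.range (k+1), c :=
                Finset.prod_le_prod (fun i _ => abs_nonneg _) (fun i _ => hc _)
            _ = c ^ (k+1) := by simp [Finset.prod_const]
        have h2 : |yseq (k+1)| ≤ 1 :=
          abs_le.mpr ⟨by linarith [(hy (k+1)).1], (hy (k+1)).2⟩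
        calc (∏ i ∈ Finset.range (k+1), |u (g i)|) * |yseq (k+1)|
            ≤ c ^ (k+1) * 1 := mul_le_mul h1 h2 (abs_nonneg _)
              (pow_nonneg hc0 _)
          _ = c ^ (k+1) := mul_one _
      · have h := (tendsto_pow_atTop_nhds_zero_of_lt_one hc0 hc1).comp
          (Filter.tendsto_add_atTop_nat 1)
        exact h
    have hy_eq : fSeries u r g = y := by
      have h3 : Filter.Tendsto (fun k : ℕ => r (g 0) + (∑ j ∈ Finset.range k,
          r (g (j+1)) * ∏ i ∈ Finset.range (j+1), u (g i))
          + (∏ i ∈ Finset.range (k+1), u (g i)) * yseq (k+1)) Filter.atTop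
          (nhds (fSeries u r g)) := by
        simpa using hA.add hB
      have h5 : (fun k : ℕ => r (g 0) + (∑ j ∈ Finset.range k,
          r (g (j+1)) * ∏ i ∈ Finset.range (j+1), u (g i))
          + (∏ i ∈ Finset.range (k+1), u (g i)) * yseq (k+1)) = fun _ => y :=
        funext fun k => (hpart k).symm
      rw [h5] at h3
      exact tendsto_nhds_unique h3 tendsto_const_nhds
    have hx := engelSum_mem g
    refine ⟨engelSum g, hx, ?_⟩
    have hGx : g = G (engelSum g) := hGuniq _ hx g rfl
    rw [hf _ hx, ← hGx, hy_eq]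
  -- conclusion
  apply Set.Subset.antisymm
  · rintro z ⟨x, hx, rfl⟩
    rcases eq_or_lt_of_le hx.1 with h | h
    · rw [← h, hf0]
      exact ⟨le_refl 0, zero_le_one⟩
    · rw [hf x ⟨h, hx.2⟩]
      exact hF01 (G x)
  · intro z hz
    rcases eq_or_lt_of_le hz.1 with h | h
    · exact ⟨0, ⟨le_refl 0, zero_le_one⟩, by rw [hf0, h]⟩
    · obtain ⟨x, hx, hfx⟩ := hsurj z h hz.2
      exact ⟨x, ⟨hx.1.le, hx.2⟩, hfx⟩
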